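/- Let $w_1,\dots,w_\kappa$ be nonnegative reals summing to $1$ with $G(s) = \frac{1}{\kappa}\sum_i e^{-w_i\kappa s}$. For any $s \ge 0$ and $\delta \ge 0$, $\frac{1}{2}[G(s) + G(s+2\delta)] - G(s+\delta) = \frac{1}{2\kappa}\sum_i e^{-w_i\kappa s}(1 - e^{-w_i\kappa\delta})^2$, and consequently $\frac{1}{2}[G(s)+G(s+2\delta)] - G(s+\delta) \ge \frac{1}{2}\left[G(s/2) - G(s/2+\delta)\right]^2$. -/

import Mathlib

theorem stmt7 (κ : ℕ) (hκ : 0 < κ) (w : Fin κ → ℝ) (hw : ∀ i, 0 ≤ w i)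
    (hsum : ∑ i, w i = 1) (G : ℝ → ℝ)
    (hG : ∀ s, G s = (1 / κ) * ∑ i, Real.exp (-(w i * κ * s)))
    (s δ : ℝ) (hs : 0 ≤ s) (hδ : 0 ≤ δ) :
    (1 / 2) * (G s + G (s + 2 * δ)) - G (s + δ) =
      (1 / (2 * κ)) * ∑ i, Real.exp (-(w i * κ * s)) * (1 - Real.exp (-(w i * κ * δ))) ^ 2 ∧
    (1 / 2) * (G s + G (s + 2 * δ)) - G (s + δ) ≥
      (1 / 2) * (G (s / 2) - G (s / 2 + δ)) ^ 2 := by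
  have hκR : (0:ℝ) < (κ:ℝ) := by exact_mod_cast hκ
  have key : (1 / 2) * (G s + G (s + 2 * δ)) - G (s + δ) =
      (1 / (2 * κ)) * ∑ i, Real.exp (-(w i * κ * s)) * (1 - Real.exp (-(w i * κ * δ))) ^ 2 := by
    rw [hG, hG, hG]
    simp only [Finset.mul_sum, mul_add, ← Finset.sum_add_distrib, ← Finset.sum_sub_distrib]
    apply Finset.sum_congr rfl
    intro i _
    have e1 : -(w i * (κ:ℝ) * s + w i * κ * (2 * δ)) = -(w i * κ * s) + (-(w i * κ * δ) + -(w i * κ * δ)) := by ring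
    have e2 : -(w i * (κ:ℝ) * s + w i * κ * δ) = -(w i * κ * s) + -(w i * κ * δ) := by ring
    rw [e1, e2, Real.exp_add, Real.exp_add, Real.exp_add]
    field_simp
    ring
  refine ⟨key, ?_⟩
  rw [key, hG, hG]
  set g : Fin κ → ℝ := fun i => Real.exp (-(w i * κ * (s/2))) * (1 - Real.exp (-(w i * κ * δ))) with hg
  have hA : (1 / (κ:ℝ)) * (∑ i, Real.exp (-(w i * κ * (s / 2)))) -
      (1 / (κ:ℝ)) * (∑ i, Real.exp (-(w i * κ * (s / 2 + δ)))) = (1 / (κ:ℝ)) * ∑ i, g i := by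
    rw [← mul_sub, ← Finset.sum_sub_distrib]
    congr 1
    apply Finset.sum_congr rfl
    intro i _
    rw [hg]
    have : Real.exp (-(w i * κ * (s/2 + δ))) =
        Real.exp (-(w i * κ * (s/2))) * Real.exp (-(w i * κ * δ)) := by
      rw [← Real.exp_add]; ring_nf
    rw [this]; ring
  rw [hA]
  have hsq : ∀ i, g i ^ 2 = Real.exp (-(w i * κ * s)) * (1 - Real.exp (-(w i * κ * δ))) ^ 2 := by
    intro i
    rw [hg]
    have : Real.exp (-(w i * κ * (s/2))) ^ 2 = Real.exp (-(w i * κ * s)) := by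
      rw [← Real.exp_nat_mul]; ring_nf
    rw [mul_pow, this]
  have cs : (∑ i, g i * 1) ^ 2 ≤ (∑ i, g i ^ 2) * (∑ _i : Fin κ, (1:ℝ) ^ 2) :=
    Finset.sum_mul_sq_le_sq_mul_sq Finset.univ _ _
  simp only [mul_one, one_pow, Finset.sum_const, Finset.card_univ, Fintype.card_fin,
    nsmul_eq_mul] at cs
  have hS : ∑ i, Real.exp (-(w i * κ * s)) * (1 - Real.exp (-(w i * κ * δ))) ^ 2 = ∑ i, g i ^ 2 := by
    apply Finset.sum_congr rfl
    intro i _; rw [hsq]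
  rw [hS, ge_iff_le]
  calc (1/2) * ((1/(κ:ℝ)) * ∑ i, g i) ^ 2 = (∑ i, g i) ^ 2 / (2 * (κ:ℝ)^2) := by
        field_simp
    _ ≤ ((∑ i, g i ^ 2) * κ) / (2 * (κ:ℝ)^2) := by gcongr
    _ = 1/(2*(κ:ℝ)) * ∑ i, g i ^ 2 := by field_simp
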